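/- For every prime p ≥ 5, C(p-1, (p-1)/2) ≡ (-1)^{(p-1)/2} · 4^{p-1} (mod p^3). -/

import Mathlib

open Finset

namespace MorleyAux

/-- inverse of `j` in `ZMod (p^3)` -/
def inv3 (p j : ℕ) : ZMod (p^3) := ((j : ZMod (p^3)))⁻¹

/-- harmonic sum -/
def Hs (p m : ℕ) : ZMod (p^3) := ∑ i ∈ range m, inv3 p (i+1)

/-- harmonic sum of squares -/
def H2s (p m : ℕ) : ZMod (p^3) := ∑ i ∈ range m, (inv3 p (i+1))^2

/-- elementary symmetric-type double harmonic sum -/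
def Es (p m : ℕ) : ZMod (p^3) := ∑ i ∈ range m, Hs p i * inv3 p (i+1)

/-- alternating harmonic sum -/
def As (p : ℕ) : ZMod (p^3) := ∑ i ∈ range (p-1), (-1)^i * inv3 p (i+1)

/-- alternating double harmonic sum -/
def Ts (p : ℕ) : ZMod (p^3) := ∑ i ∈ range (p-1), (-1)^i * inv3 p (i+1) * Hs p i

lemma Hs_succ (p m : ℕ) : Hs p (m+1) = Hs p m + inv3 p (m+1) := by
  simp [Hs, sum_range_succ]

lemma H2s_succ (p m : ℕ) : H2s p (m+1) = H2s p m + (inv3 p (m+1))^2 := by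
  simp [H2s, sum_range_succ]

lemma Es_succ (p m : ℕ) : Es p (m+1) = Es p m + Hs p m * inv3 p (m+1) := by
  simp [Es, sum_range_succ]

lemma pcube (p : ℕ) : ((p : ZMod (p^3)))^3 = 0 := by
  rw [← Nat.cast_pow, ZMod.natCast_self]

lemma prod_expand (p : ℕ) (c : ZMod (p^3)) (m : ℕ) :
    ∏ i ∈ range m, (1 - c * (p : ZMod (p^3)) * inv3 p (i+1))
      = 1 - c * (p : ZMod (p^3)) * Hs p m + c^2 * (p : ZMod (p^3))^2 * Es p m := by
  induction m with
  | zero => simp [Hs, Es]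
  | succ m ih =>
    rw [prod_range_succ, ih, Hs_succ, Es_succ]
    have h3 := pcube p
    linear_combination (-(c^3) * (Es p m) * (inv3 p (m+1))) * h3

lemma eid (p m : ℕ) : 2 * Es p m = (Hs p m)^2 - H2s p m := by
  induction m with
  | zero => simp [Hs, Es, H2s]
  | succ m ih =>
    rw [Hs_succ, Es_succ, H2s_succ]
    linear_combination ih

lemma sum_range_split {M : Type*} [AddCommMonoid M] (g : ℕ → M) (a b : ℕ) :
    ∑ i ∈ range (a+b), g i
      = ∑ i ∈ range a, g i + ∑ j ∈ range b, g (a + b - 1 - j) := by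
  have hdisj : Disjoint (range a) ((range b).map (addLeftEmbedding a)) := by
    rw [Finset.disjoint_left]
    intro x hx hx'
    simp only [Finset.mem_range] at hx
    simp only [Finset.mem_map, Finset.mem_range, addLeftEmbedding_apply] at hx'
    omega
  rw [Finset.range_add, Finset.sum_union hdisj]
  simp only [Finset.sum_map, addLeftEmbedding_apply]
  congr 1
  rw [← Finset.sum_range_reflect (fun j => g (a + j)) b]
  apply Finset.sum_congr rfl
  intro j hj
  simp only [Finset.mem_range] at hj
  congr 1
  omega

lemma isUnit_cast (p : ℕ) (hp : p.Prime) (j : ℕ) (hj : ¬ p ∣ j) :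
    IsUnit ((j : ℕ) : ZMod (p^3)) := by
  rw [ZMod.isUnit_iff_coprime]
  exact Nat.Coprime.pow_right _ (((Nat.Prime.coprime_iff_not_dvd hp).2 hj).symm)

lemma mulinv (p : ℕ) (hp : p.Prime) (j : ℕ) (hj : ¬ p ∣ j) :
    ((j : ℕ) : ZMod (p^3)) * inv3 p j = 1 :=
  ZMod.mul_inv_of_unit _ (isUnit_cast p hp j hj)

lemma not_dvd_of_lt (p j : ℕ) (h1 : 0 < j) (h2 : j < p) : ¬ p ∣ j :=
  fun h => absurd (Nat.le_of_dvd h1 h) (by omega)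

lemma kill (p : ℕ) (hp : p.Prime) (x : ZMod (p^3))
    (hx : ZMod.castHom (dvd_pow_self p (by norm_num : (3:ℕ) ≠ 0)) (ZMod p) x = 0) :
    ((p : ZMod (p^3)))^2 * x = 0 := by
  haveI : NeZero (p^3) := ⟨pow_ne_zero _ hp.pos.ne'⟩
  have hxv : ((x.val : ℕ) : ZMod (p^3)) = x := ZMod.natCast_rightInverse x
  have h1 : ((x.val : ℕ) : ZMod p) = 0 := by
    rw [← map_natCast (ZMod.castHom (dvd_pow_self p (by norm_num : (3:ℕ) ≠ 0)) (ZMod p)) x.val,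
      hxv, hx]
  obtain ⟨m, hm⟩ := (ZMod.natCast_eq_zero_iff _ p).1 h1
  calc ((p : ZMod (p^3)))^2 * x
      = ((p : ZMod (p^3)))^2 * ((x.val : ℕ) : ZMod (p^3)) := by rw [hxv]
    _ = ((p^3 : ℕ) : ZMod (p^3)) * (m : ZMod (p^3)) := by rw [hm]; push_cast; ring
    _ = 0 := by rw [ZMod.natCast_self, zero_mul]

lemma choose_eq (p : ℕ) (hp : p.Prime) (c k : ℕ) (hc : 1 ≤ c) (hk : k ≤ p - 1) :
    ((Nat.choose (c*p - 1) k : ℕ) : ZMod (p^3))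
      = (-1)^k * (1 - (c : ZMod (p^3)) * p * Hs p k
          + (c : ZMod (p^3))^2 * (p : ZMod (p^3))^2 * Es p k) := by
  have hp2 : 2 ≤ p := hp.two_le
  have hcp : p ≤ c * p := Nat.le_mul_of_pos_left p hc
  set R := ZMod (p^3)
  have h1 : (((c*p-1).descFactorial k : ℕ) : R)
      = ((Nat.factorial k : ℕ) : R) * ((Nat.choose (c*p - 1) k : ℕ) : R) := by
    rw [Nat.descFactorial_eq_factorial_mul_choose, Nat.cast_mul]
  have h2 : (((c*p-1).descFactorial k : ℕ) : R)
      = ∏ i ∈ range k, (((c*p - 1 - i : ℕ)) : R) := by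
    rw [Nat.descFactorial_eq_prod_range, Nat.cast_prod]
  have h3 : ∏ i ∈ range k, (((c*p - 1 - i : ℕ)) : R)
      = ∏ i ∈ range k, ((-(((i+1 : ℕ)) : R)) * (1 - (c : R) * p * inv3 p (i+1))) := by
    apply prod_congr rfl
    intro i hi
    rw [mem_range] at hi
    have hlt : i + 1 < p := by omega
    have heq : (c*p - 1 - i : ℕ) = c*p - (i+1) := by omega
    have hle : i + 1 ≤ c*p := by omega
    have hinv := mulinv p hp (i+1) (not_dvd_of_lt p (i+1) (by omega) hlt)
    rw [heq, Nat.cast_sub hle]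
    push_cast +zetaDelta at hinv ⊢
    linear_combination (-(c : R) * p) * hinv
  have hfact : ∏ i ∈ range k, (((i+1 : ℕ)) : R) = ((Nat.factorial k : ℕ) : R) := by
    rw [← Nat.cast_prod]
    exact_mod_cast congrArg (Nat.cast : ℕ → ZMod (p^3)) (Finset.prod_range_add_one_eq_factorial k)
  have h4 : ∏ i ∈ range k, ((-(((i+1 : ℕ)) : R)) * (1 - (c : R) * p * inv3 p (i+1)))
      = (-1)^k * ((Nat.factorial k : ℕ) : R) * (1 - (c : R) * p * Hs p k
          + (c : R)^2 * (p : R)^2 * Es p k) := by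
    have hneg : ∀ i, (-(((i+1 : ℕ)) : R)) = (-1) * (((i+1 : ℕ)) : R) := fun i => by ring
    simp only [hneg]
    rw [prod_mul_distrib, prod_mul_distrib, prod_const, hfact, prod_expand, card_range]
  have hfacU : IsUnit ((Nat.factorial k : ℕ) : R) := by
    apply isUnit_cast p hp
    intro h
    have := (Nat.Prime.dvd_factorial hp).1 h
    omega
  apply hfacU.mul_left_cancel
  rw [← h1, h2, h3, h4]
  ring

lemma sum_range_cast {M : Type*} [AddCommMonoid M] (p : ℕ) [NeZero p] (f : ZMod p → M) :
    ∑ i ∈ range p, f ((i : ℕ) : ZMod p) = ∑ x : ZMod p, f x := by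
  apply Finset.sum_nbij' (i := fun a => ((a : ℕ) : ZMod p)) (j := fun x => x.val)
  · intro a _; exact mem_univ _
  · intro x _; rw [mem_range]; exact ZMod.val_lt x
  · intro a ha; rw [mem_range] at ha; exact ZMod.val_cast_of_lt ha
  · intro x _; exact ZMod.natCast_rightInverse x
  · intro a _; rfl

lemma sum_inv_pow_eq_zero (p : ℕ) [Fact p.Prime] (e : ℕ)
    (hp2 : (2 : ZMod p) ≠ 0) (hne : ((2 : ZMod p))^e ≠ 1) :
    ∑ x : ZMod p, (x⁻¹)^e = 0 := by
  have key : ∑ x : ZMod p, (x⁻¹)^e = ∑ x : ZMod p, (((2 : ZMod p) * x)⁻¹)^e :=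
    (Fintype.sum_bijective _ (mulLeft_bijective₀ (2 : ZMod p) hp2)
      (fun x => (((2 : ZMod p) * x)⁻¹)^e) (fun x => (x⁻¹)^e) (fun x => rfl)).symm
  have h4 : ∀ x : ZMod p, (((2 : ZMod p) * x)⁻¹)^e = ((2 : ZMod p)^e)⁻¹ * (x⁻¹)^e := by
    intro x; rw [mul_inv, mul_pow, inv_pow]
  simp only [h4] at key
  rw [← Finset.mul_sum] at key
  have h5 : (1 - ((2 : ZMod p)^e)⁻¹) * ∑ x : ZMod p, (x⁻¹)^e = 0 := by
    rw [sub_mul, one_mul]; linear_combination key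
  rcases mul_eq_zero.1 h5 with h | h
  · exfalso
    apply hne
    have h1 : ((2 : ZMod p)^e)⁻¹ = 1 := by linear_combination -h
    rwa [inv_eq_one] at h1
  · exact h

lemma inv_pair (p : ℕ) (hp : p.Prime) (k : ℕ) (hk1 : 0 < k) (hk2 : k < p) :
    inv3 p (p - k) = -(inv3 p k) * (1 + (p : ZMod (p^3)) * inv3 p k
      + (p : ZMod (p^3))^2 * (inv3 p k)^2) := by
  have hx := mulinv p hp k (not_dvd_of_lt p k hk1 hk2)
  have h3 := pcube p
  apply ZMod.inv_eq_of_mul_eq_one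
  rw [Nat.cast_sub (le_of_lt hk2)]
  linear_combination (1 + (p : ZMod (p^3)) * inv3 p k + (p : ZMod (p^3))^2 * (inv3 p k)^2) * hx
    - (inv3 p k)^3 * h3

end MorleyAux

open MorleyAux

/-- Morley (1895): for a prime `p ≥ 5`,
`C(p-1, (p-1)/2) ≡ (-1)^{(p-1)/2} · 4^{p-1} (mod p³)`. -/
theorem morley_congruence (p : ℕ) (hp : p.Prime) (h5 : 5 ≤ p) :
    ((Nat.choose (p - 1) ((p - 1) / 2) : ℤ)) ≡
      (-1) ^ ((p - 1) / 2) * 4 ^ (p - 1) [ZMOD (p ^ 3 : ℕ)] := by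
  haveI := Fact.mk hp
  haveI : NeZero p := ⟨hp.pos.ne'⟩
  set R := ZMod (p^3) with hRdef
  set n := (p - 1) / 2 with hn
  have hodd : p % 2 = 1 := by
    rcases hp.eq_two_or_odd' with h | h
    · omega
    · obtain ⟨k, hk⟩ := h; omega
  have h2n : n + n = p - 1 := by omega
  -- Fermat quotient
  have hfermat : (2 : ZMod p)^(p-1) = 1 := by
    apply ZMod.pow_card_sub_one_eq_one
    intro h
    have h' : ((2:ℕ) : ZMod p) = 0 := by exact_mod_cast h
    have := Nat.le_of_dvd (by norm_num) ((ZMod.natCast_eq_zero_iff 2 p).1 h')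
    omega
  obtain ⟨q, hq⟩ : ∃ q : ℕ, 2^(p-1) = 1 + p * q := by
    have h1 : ((2^(p-1) - 1 : ℕ) : ZMod p) = 0 := by
      have h2 : (1:ℕ) ≤ 2^(p-1) := Nat.one_le_two_pow
      push_cast [Nat.cast_sub h2]
      rw [hfermat]; ring
    obtain ⟨t, ht⟩ := (ZMod.natCast_eq_zero_iff _ p).1 h1
    have h2 : (1:ℕ) ≤ 2^(p-1) := Nat.one_le_two_pow
    exact ⟨t, by omega⟩
  -- the reduction hom
  set ψ := ZMod.castHom (dvd_pow_self p (by norm_num : (3:ℕ) ≠ 0)) (ZMod p) with hψdef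
  have hψinv : ∀ j : ℕ, 0 < j → j < p → ψ (inv3 p j) = ((j : ℕ) : ZMod p)⁻¹ := by
    intro j h1 h2
    have hm := mulinv p hp j (not_dvd_of_lt p j h1 h2)
    have hh : ((j:ℕ) : ZMod p) * ψ (inv3 p j) = 1 := by
      rw [← map_natCast ψ j, ← map_mul, hm, map_one]
    exact (ZMod.inv_eq_of_mul_eq_one p _ _ hh).symm
  have h20 : (2 : ZMod p) ≠ 0 := by
    intro h
    have h' : ((2:ℕ) : ZMod p) = 0 := by exact_mod_cast h
    have := Nat.le_of_dvd (by norm_num) ((ZMod.natCast_eq_zero_iff 2 p).1 h')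
    omega
  -- power sums mod p
  have hZ : ∀ e : ℕ, 0 < e → ((2 : ZMod p))^e ≠ 1 →
      ∑ i ∈ range (p-1), (((i+1 : ℕ) : ZMod p)⁻¹)^e = 0 := by
    intro e he hne
    have hzero := sum_inv_pow_eq_zero p e h20 hne
    have hall := sum_range_cast p (fun x : ZMod p => (x⁻¹)^e)
    have hsucc := Finset.sum_range_succ' (fun i => (((i : ℕ) : ZMod p)⁻¹)^e) (p-1)
    rw [show p - 1 + 1 = p by omega] at hsucc
    have h0 : (((0 : ℕ) : ZMod p)⁻¹)^e = 0 := by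
      simp [zero_pow he.ne']
    rw [hall, hzero, h0] at hsucc
    linear_combination -hsucc
  have hne1 : ((2 : ZMod p))^1 ≠ 1 := by
    rw [pow_one]
    intro h
    have h' : ((2:ℕ) : ZMod p) = ((1:ℕ) : ZMod p) := by exact_mod_cast h
    have := (Nat.modEq_iff_dvd' (by norm_num)).1 ((ZMod.natCast_eq_natCast_iff _ _ _).1 h').symm
    have := Nat.le_of_dvd (by norm_num) this
    omega
  have hne2 : ((2 : ZMod p))^2 ≠ 1 := by
    intro h
    have h' : ((4:ℕ) : ZMod p) = ((1:ℕ) : ZMod p) := by push_cast; linear_combination h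
    have := (Nat.modEq_iff_dvd' (by norm_num)).1 ((ZMod.natCast_eq_natCast_iff _ _ _).1 h').symm
    have := Nat.le_of_dvd (by norm_num) this
    omega
  have hZ1 : ∑ i ∈ range (p-1), ((i+1 : ℕ) : ZMod p)⁻¹ = 0 := by
    have := hZ 1 (by norm_num) hne1
    simpa using this
  have hZ2 : ∑ i ∈ range (p-1), (((i+1 : ℕ) : ZMod p)⁻¹)^2 = 0 := hZ 2 (by norm_num) hne2
  have hZ3 : ∑ i ∈ range n, (((i+1 : ℕ) : ZMod p)⁻¹)^2 = 0 := by
    have hsp := sum_range_split (fun i => (((i+1 : ℕ) : ZMod p)⁻¹)^2) n n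
    have hsec : ∀ j ∈ range n, (((n + n - 1 - j + 1 : ℕ) : ZMod p)⁻¹)^2
        = (((j+1 : ℕ) : ZMod p)⁻¹)^2 := by
      intro j hj
      rw [mem_range] at hj
      have he1 : (n + n - 1 - j + 1 : ℕ) = p - (j+1) := by omega
      have he2 : ((p - (j+1) : ℕ) : ZMod p) = -(((j+1 : ℕ)) : ZMod p) := by
        rw [Nat.cast_sub (by omega : j+1 ≤ p)]
        simp
      rw [he1, he2, inv_neg]
      ring
    rw [sum_congr rfl hsec, h2n, hZ2] at hsp
    have h2 : (2 : ZMod p) * ∑ i ∈ range n, (((i+1 : ℕ) : ZMod p)⁻¹)^2 = 0 := by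
      linear_combination -hsp
    rcases mul_eq_zero.1 h2 with h | h
    · exact absurd h h20
    · exact h
  have h3cube := pcube p
  -- F6 : p² H2ₙ = 0
  have hF6 : ((p:R))^2 * H2s p n = 0 := by
    apply kill p hp
    have hψ : ψ (H2s p n) = ∑ i ∈ range n, (((i+1 : ℕ) : ZMod p)⁻¹)^2 := by
      rw [H2s, map_sum]
      apply sum_congr rfl
      intro i hi
      rw [mem_range] at hi
      rw [map_pow, hψinv (i+1) (by omega) (by omega)]
    rw [← hψdef, hψ, hZ3]
  -- ψ of full-range sums
  have hψH : ψ (Hs p (p-1)) = 0 := by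
    have hψ : ψ (Hs p (p-1)) = ∑ i ∈ range (p-1), ((i+1 : ℕ) : ZMod p)⁻¹ := by
      rw [Hs, map_sum]
      apply sum_congr rfl
      intro i hi
      rw [mem_range] at hi
      rw [hψinv (i+1) (by omega) (by omega)]
    rw [hψ, hZ1]
  have hψH2 : ψ (H2s p (p-1)) = 0 := by
    have hψ : ψ (H2s p (p-1)) = ∑ i ∈ range (p-1), (((i+1 : ℕ) : ZMod p)⁻¹)^2 := by
      rw [H2s, map_sum]
      apply sum_congr rfl
      intro i hi
      rw [mem_range] at hi
      rw [map_pow, hψinv (i+1) (by omega) (by omega)]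
    rw [hψ, hZ2]
  -- F3 : p² E_{p-1} = 0
  have hF3 : ((p:R))^2 * Es p (p-1) = 0 := by
    apply kill p hp
    have h := congrArg ψ (eid p (p-1))
    rw [map_mul, map_sub, map_pow, hψH, hψH2, map_ofNat] at h
    have h2 : (2 : ZMod p) * ψ (Es p (p-1)) = 0 := by linear_combination h
    rcases mul_eq_zero.1 h2 with h' | h'
    · exact absurd h' h20
    · rw [← hψdef]; exact h'
  -- F2 : p H_{p-1} = 0 (Wolstenholme)
  have hF2 : ((p:R)) * Hs p (p-1) = 0 := by
    have hpair : ∀ j ∈ range n, inv3 p (j+1) + inv3 p (n + n - 1 - j + 1)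
        = -(p:R)*(inv3 p (j+1))^2 - (p:R)^2*(inv3 p (j+1))^3 := by
      intro j hj
      rw [mem_range] at hj
      have he1 : (n + n - 1 - j + 1 : ℕ) = p - (j+1) := by omega
      rw [he1, inv_pair p hp (j+1) (by omega) (by omega)]
      ring
    have hsplit : Hs p (p-1) = ∑ j ∈ range n,
        (inv3 p (j+1) + inv3 p (n + n - 1 - j + 1)) := by
      rw [Hs, ← h2n, sum_range_split, ← sum_add_distrib]
    have h1 : Hs p (p-1) = -(p:R) * H2s p n
        - (p:R)^2 * (∑ j ∈ range n, (inv3 p (j+1))^3) := by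
      rw [hsplit, sum_congr rfl hpair, sum_sub_distrib, ← mul_sum, ← mul_sum, H2s]
    linear_combination (p:R) * h1 - (∑ j ∈ range n, (inv3 p (j+1))^3) * h3cube - hF6
  -- F4 : A = H_{p-1} - H_n
  have hF4 : As p = Hs p (p-1) - Hs p n := by
    have claim : ∀ m : ℕ, m ≤ n →
        ∑ i ∈ range (m+m), (-1)^i * inv3 p (i+1) = Hs p (m+m) - Hs p m := by
      intro m
      induction m with
      | zero => simp [Hs]
      | succ m ih =>
        intro hm
        have ihm := ih (by omega)
        have e1 : (m+1) + (m+1) = (m+m) + 1 + 1 := by omega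
        rw [e1, sum_range_succ, sum_range_succ, ihm, Hs_succ, Hs_succ, Hs_succ]
        have hkey : inv3 p (m+1) = 2 * inv3 p (m+m+1+1) := by
          apply ZMod.inv_eq_of_mul_eq_one
          have hy := mulinv p hp (m+m+1+1) (not_dvd_of_lt p (m+m+1+1) (by omega) (by omega))
          push_cast at hy ⊢
          linear_combination hy
        have hev : ((-1 : R))^(m+m) = 1 := Even.neg_one_pow ⟨m, rfl⟩
        have hodd' : ((-1 : R))^(m+m+1) = -1 := by
          rw [pow_succ, hev]; ring
        rw [hev, hodd', hkey]
        push_cast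
        ring
    have := claim n le_rfl
    rw [h2n] at this
    rw [As, this]
  -- sums of binomial coefficients
  have hsum_choose : ∀ c : ℕ, 1 ≤ c →
      ∑ i ∈ range (p-1), ((Nat.choose (c*p) (i+1) : ℕ) : R)
        = (c:R) * (p:R) * As p - (c:R)^2 * (p:R)^2 * Ts p := by
    intro c hc
    have hterm : ∀ i ∈ range (p-1), ((Nat.choose (c*p) (i+1) : ℕ) : R)
        = (c:R)*(p:R)*((-1)^i * inv3 p (i+1))
          - (c:R)^2*(p:R)^2*((-1)^i * inv3 p (i+1) * Hs p i) := by
      intro i hi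
      rw [mem_range] at hi
      have h0 : 0 < c * p := Nat.mul_pos hc hp.pos
      have hnat := Nat.add_one_mul_choose_eq (c*p - 1) i
      rw [show (c*p - 1) + 1 = c*p from by omega] at hnat
      have hR := congrArg (Nat.cast : ℕ → R) hnat
      push_cast +zetaDelta at hR
      have hch := choose_eq p hp c i hc (by omega)
      have hinv := mulinv p hp (i+1) (not_dvd_of_lt p (i+1) (by omega) (by omega))
      rw [hch] at hR
      push_cast at hR hinv ⊢
      linear_combination -(inv3 p (i+1)) * hR
        - ((Nat.choose (c*p) (i+1) : ℕ) : R) * hinv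
        + ((-1)^i * (c:R)^3 * inv3 p (i+1) * Es p i) * h3cube
    rw [sum_congr rfl hterm, sum_sub_distrib, ← mul_sum, ← mul_sum, As, Ts]
  -- equation from (1+1)^p
  have h2p : (2:ℕ)^p = 2 + 2*(p*q) := by
    have h : (2:ℕ)^p = 2^(p-1) * 2 := by
      rw [← pow_succ]
      congr 1
      omega
    rw [h, hq]
    ring
  have heq1 : (p:R) * As p - (p:R)^2 * Ts p = 2*(p:R)*(q:R) := by
    have hNat1 := Nat.sum_range_choose p
    rw [sum_range_succ] at hNat1
    have hps := Finset.sum_range_succ' (fun i => Nat.choose p i) (p-1)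
    rw [show p - 1 + 1 = p from by omega] at hps
    rw [hps, Nat.choose_self, Nat.choose_zero_right, h2p] at hNat1
    have hcast := congrArg (Nat.cast : ℕ → R) hNat1
    push_cast +zetaDelta at hcast
    have hsc := hsum_choose 1 le_rfl
    simp only [one_mul] at hsc
    push_cast at hsc
    rw [hsc] at hcast
    linear_combination hcast
  -- equation from (1+1)^(2p)
  have hNatE2 : 2^(2*p) = 2 * (∑ i ∈ range (p-1), Nat.choose (2*p) (i+1))
      + 2 + Nat.choose (2*p) p := by
    have hNat2 := Nat.sum_range_choose (2*p)
    have hsplit := sum_range_split (fun i => Nat.choose (2*p) i) (p+1) p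
    rw [show (p+1) + p = 2*p + 1 from by omega] at hsplit
    have hsym : ∀ j ∈ range p, Nat.choose (2*p) (2*p + 1 - 1 - j)
        = Nat.choose (2*p) j := by
      intro j hj
      rw [mem_range] at hj
      rw [show 2*p + 1 - 1 - j = 2*p - j from by omega]
      exact Nat.choose_symm (by omega)
    rw [sum_congr rfl hsym] at hsplit
    have htop : ∑ i ∈ range (p+1), Nat.choose (2*p) i
        = ∑ i ∈ range p, Nat.choose (2*p) i + Nat.choose (2*p) p :=
      Finset.sum_range_succ _ p
    have hps2 := Finset.sum_range_succ' (fun i => Nat.choose (2*p) i) (p-1)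
    rw [show p - 1 + 1 = p from by omega] at hps2
    rw [htop, hps2, Nat.choose_zero_right] at hsplit
    rw [hsplit] at hNat2
    omega
  -- the central binomial coefficient
  have hC2p : ((Nat.choose (2*p) p : ℕ) : R) = 2 := by
    have hnat := Nat.add_one_mul_choose_eq (2*p - 1) (p-1)
    rw [show (2*p - 1) + 1 = 2*p from by omega, show (p-1) + 1 = p from by omega] at hnat
    have h2 : (2 * Nat.choose (2*p-1) (p-1)) * p = Nat.choose (2*p) p * p := by
      rw [← hnat]; ring
    have h3 : 2 * Nat.choose (2*p-1) (p-1) = Nat.choose (2*p) p :=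
      Nat.eq_of_mul_eq_mul_right hp.pos h2
    have hch := choose_eq p hp 2 (p-1) (by norm_num) le_rfl
    have hev : ((-1 : R))^(p-1) = 1 := Even.neg_one_pow ⟨n, by omega⟩
    rw [hev] at hch
    have hcast := congrArg (Nat.cast : ℕ → R) h3
    push_cast +zetaDelta at hcast hch
    rw [hch] at hcast
    rw [← hcast]
    linear_combination (-4 : R) * hF2 + (8:R) * hF3
  have h4p2 : (2:ℕ)^(2*p) = 4*(1+p*q)^2 := by
    have h : (2:ℕ)^(2*p) = ((2:ℕ)^p)^2 := by rw [← pow_mul, mul_comm]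
    rw [h, h2p]
    ring
  have heq2 : (4:R)*(1+(p:R)*(q:R))^2
      = 4*(p:R)*(As p) - 8*(p:R)^2*(Ts p) + 4 := by
    have hcast := congrArg (Nat.cast : ℕ → R) hNatE2
    rw [h4p2] at hcast
    push_cast +zetaDelta at hcast
    have hsc := hsum_choose 2 (by norm_num)
    push_cast at hsc
    rw [hsc] at hcast
    linear_combination hcast + hC2p
  -- units 2 and 4 in R
  have hU2 : IsUnit (2:R) := by
    have := isUnit_cast p hp 2 (not_dvd_of_lt p 2 (by norm_num) (by omega))
    simpa using this
  have hU4 : IsUnit (4:R) := by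
    have := isUnit_cast p hp 4 (not_dvd_of_lt p 4 (by norm_num) (by omega))
    simpa using this
  -- p² T = -p² q²
  have hT : (p:R)^2 * Ts p = -((p:R)^2*(q:R)^2) := by
    have h4 : (4:R) * ((p:R)^2 * Ts p) = (4:R) * (-((p:R)^2*(q:R)^2)) := by
      linear_combination heq2 + 4 * heq1
    exact hU4.mul_left_cancel h4
  have hpHn : (p:R) * Hs p n = -(2*(p:R)*(q:R)) + (p:R)^2*(q:R)^2 := by
    linear_combination -heq1 + (p:R) * hF4 + hF2 - hT
  have hp2Hn : (p:R)^2 * Hs p n = -(2*(p:R)^2*(q:R)) := by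
    linear_combination (p:R) * hpHn + (q:R)^2 * h3cube
  have hp2Hn2 : (p:R)^2 * (Hs p n)^2 = 4*(p:R)^2*(q:R)^2 := by
    linear_combination (Hs p n) * hp2Hn - 2*(q:R) * hp2Hn
  have hp2En : (p:R)^2 * Es p n = 2*(p:R)^2*(q:R)^2 := by
    have h := eid p n
    have h2 : (2:R) * ((p:R)^2 * Es p n) = (2:R) * (2*(p:R)^2*(q:R)^2) := by
      linear_combination (p:R)^2 * h + hp2Hn2 - hF6
    exact hU2.mul_left_cancel h2
  -- final computation
  have hch := choose_eq p hp 1 n le_rfl (by omega)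
  simp only [one_mul] at hch
  push_cast at hch
  have hfin : ((Nat.choose (p-1) n : ℕ) : R) = (-1)^n * (1 + (p:R)*(q:R))^2 := by
    rw [hch]
    have hkey : (1:R) - (p:R)*Hs p n + (p:R)^2 * Es p n = (1 + (p:R)*(q:R))^2 := by
      linear_combination -hpHn + hp2En
    linear_combination ((-1:R))^n * hkey
  have h4pow : (4:R)^(p-1) = (1 + (p:R)*(q:R))^2 := by
    have hN : (4:ℕ)^(p-1) = (1+p*q)^2 := by
      have h44 : (4:ℕ)^(p-1) = ((2:ℕ)^(p-1))^2 := by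
        rw [show (4:ℕ) = 2^2 from rfl, ← pow_mul, mul_comm, pow_mul]
      rw [h44, hq]
    have hcast4 := congrArg (Nat.cast : ℕ → R) hN
    push_cast at hcast4
    exact hcast4
  rw [← ZMod.intCast_eq_intCast_iff]
  push_cast
  rw [hfin, h4pow]
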